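/- Let R be a (possibly noncommutative) ring, n a positive integer, and p a nonnegative integer. Given elements h_{k,i} ∈ R for all k ∈ ℤ and i ∈ [n], define for each α ∈ ℤ^n the element t_α := rowdet((h_{α_i + j, i})_{i,j ∈ [n]}), where rowdet((a_{i,j})) = Σ_{σ ∈ S_n} sgn(σ) a_{1,σ(1)} a_{2,σ(2)} ⋯ a_{n,σ(n)}. Let η = (1, 2, …, n-1, n+p) ∈ ℤ^n. Then for any α ∈ ℤ^n, Σ_{β ∈ ℕ^n, |β| = p} t_{α+β} = rowdet((h_{α_i + η_j, i})_{i,j ∈ [n]}), where |β| denotes β_1 + ⋯ + β_n and α+β is the entrywise sum. -/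

import Mathlib

/-- The row-determinant of a square matrix over a (possibly noncommutative) ring:
the sum over all permutations σ of sgn(σ) · a_{1,σ(1)} a_{2,σ(2)} ⋯ a_{n,σ(n)},
with the factors multiplied in order of increasing row index. -/
def rowdet {R : Type*} [Ring R] {n : ℕ} (A : Matrix (Fin n) (Fin n) R) : R :=
  ∑ σ : Equiv.Perm (Fin n), (Equiv.Perm.sign σ : ℤ) • (List.ofFn fun i => A i (σ i)).prod

namespace FirstPieriAux

open Finset

variable (n p : ℕ)

/-- η as a function on columns. -/
def eta (j : Fin n) : ℤ := if (j : ℕ) + 1 = n then (n : ℤ) + (p : ℤ) else ((j : ℕ) : ℤ) + 1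

/-- `Tn n = 1 + 2 + ⋯ + n` as an integer. -/
def Tn : ℤ := ∑ k : Fin n, (((k : ℕ) : ℤ) + 1)

/-- The index set of exponent vectors. -/
noncomputable def S : Finset (Fin n → ℤ) :=
  (Fintype.piFinset fun _ : Fin n => Finset.Icc (1 : ℤ) ((n : ℤ) + (p : ℤ))).filter
    fun c => ∑ i, c i = (p : ℤ) + Tn n

/-- The 0-1 coefficient matrix attached to an exponent vector. -/
def Mat (c : Fin n → ℤ) : Matrix (Fin n) (Fin n) ℤ :=
  Matrix.of fun j i => if ((j : ℕ) : ℤ) + 1 ≤ c i then 1 else 0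

lemma det_Mat (c : Fin n → ℤ) :
    (Mat n c).det = ∑ σ : Equiv.Perm (Fin n), (Equiv.Perm.sign σ : ℤ) *
      (if ∀ i, ((σ i : ℕ) : ℤ) + 1 ≤ c i then 1 else 0) := by
  rw [Matrix.det_apply']
  refine Finset.sum_congr rfl fun σ _ => ?_
  have hprod : (∏ i, Mat n c (σ i) i)
      = if ∀ i, ((σ i : ℕ) : ℤ) + 1 ≤ c i then 1 else 0 := by
    rw [show (∏ i, Mat n c (σ i) i)
        = ∏ i, (if ((σ i : ℕ) : ℤ) + 1 ≤ c i then (1 : ℤ) else 0) from rfl,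
      Finset.prod_boole]
    simp
  rw [hprod]
  norm_cast

lemma sum_eta (hn : 0 < n) : ∑ k : Fin n, eta n p k = (p : ℤ) + Tn n := by
  have h0 : ∀ k : Fin n, eta n p k
      = ((((k : ℕ) : ℤ)) + 1) + (if k = (⟨n - 1, by omega⟩ : Fin n) then (p : ℤ) else 0) := by
    intro k
    rcases eq_or_ne k (⟨n - 1, by omega⟩ : Fin n) with rfl | hk
    · have h1 : ((⟨n - 1, by omega⟩ : Fin n) : ℕ) + 1 = n := by simp; omega
      simp only [eta, h1, if_pos rfl, if_pos trivial]
      have : (((⟨n - 1, by omega⟩ : Fin n) : ℕ) : ℤ) = (n : ℤ) - 1 := by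
        simp; omega
      rw [this]; ring
    · have h2 : (k : ℕ) + 1 ≠ n := by
        intro hc
        exact hk (Fin.ext (by simp; omega))
      simp [eta, h2, hk]
  rw [Finset.sum_congr rfl fun k _ => h0 k, Finset.sum_add_distrib]
  rw [Finset.sum_ite_eq' Finset.univ (⟨n - 1, by omega⟩ : Fin n) (fun _ => (p : ℤ))]
  simp [Tn]
  ring

lemma eta_inj : Function.Injective (eta n p) := by
  intro j k hjk
  have hj := j.isLt
  have hk := k.isLt
  unfold eta at hjk
  apply Fin.ext
  split_ifs at hjk <;> omega

lemma eta_mem (k : Fin n) : 1 ≤ eta n p k ∧ eta n p k ≤ (n : ℤ) + p := by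
  have := k.isLt
  unfold eta
  split_ifs <;> constructor <;> omega

variable {R : Type*} [Ring R] (h : ℤ → Fin n → R) (α : Fin n → ℤ)

/-- The monomial attached to an exponent vector. -/
def Q (c : Fin n → ℤ) : R := (List.ofFn fun i => h (α i + c i) i).prod

lemma step1 (σ : Equiv.Perm (Fin n)) :
    ∑ β ∈ Finset.Nat.antidiagonalTuple n p,
      (List.ofFn fun i => h (α i + (β i : ℤ) + (((σ i : ℕ) : ℤ) + 1)) i).prod
    = ∑ c ∈ S n p, if ∀ i, ((σ i : ℕ) : ℤ) + 1 ≤ c i then Q n h α c else 0 := by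
  classical
  rw [← Finset.sum_filter]
  have hTn : ∑ i : Fin n, (((σ i : ℕ) : ℤ) + 1) = Tn n :=
    Equiv.sum_comp σ (fun k : Fin n => ((k : ℕ) : ℤ) + 1)
  refine Finset.sum_nbij' (i := fun β : Fin n → ℕ => fun i => (β i : ℤ) + ((σ i : ℕ) : ℤ) + 1)
    (j := fun c : Fin n → ℤ => fun i => (c i - ((σ i : ℕ) : ℤ) - 1).toNat)
    ?_ ?_ ?_ ?_ ?_
  · intro β hβ
    have hsum : ∑ i, β i = p := Finset.Nat.mem_antidiagonalTuple.mp hβ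
    have hle : ∀ i, β i ≤ p := by
      intro i
      rw [← hsum]
      exact Finset.single_le_sum (fun _ _ => Nat.zero_le _) (Finset.mem_univ i)
    simp only [Finset.mem_filter, S]
    refine ⟨⟨?_, ?_⟩, ?_⟩
    · rw [Fintype.mem_piFinset]
      intro i
      rw [Finset.mem_Icc]
      have := (σ i).isLt
      have := hle i
      constructor <;> omega
    · have e1 : (∑ i, ((β i : ℤ) + ((σ i : ℕ) : ℤ) + 1))
          = (∑ i, (β i : ℤ)) + ∑ i, (((σ i : ℕ) : ℤ) + 1) := by
        rw [← Finset.sum_add_distrib]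
        exact Finset.sum_congr rfl fun i _ => by ring
      have e2 : (∑ i, (β i : ℤ)) = (p : ℤ) := by
        rw [← Nat.cast_sum, hsum]
      rw [e1, e2, hTn]
    · intro i; omega
  · intro c hc
    simp only [Finset.mem_filter, S] at hc
    obtain ⟨⟨-, hcsum⟩, hcond⟩ := hc
    rw [Finset.Nat.mem_antidiagonalTuple]
    have key : ((∑ i, (c i - ((σ i : ℕ) : ℤ) - 1).toNat : ℕ) : ℤ) = (p : ℤ) := by
      push_cast
      rw [Finset.sum_congr rfl fun i _ => Int.toNat_of_nonneg (by have := hcond i; omega)]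
      have : ∑ i, (c i - ((σ i : ℕ) : ℤ) - 1) = (∑ i, c i) - ∑ i, (((σ i : ℕ) : ℤ) + 1) := by
        rw [← Finset.sum_sub_distrib]
        exact Finset.sum_congr rfl fun i _ => by ring
      rw [this, hTn, hcsum]
      ring
    exact_mod_cast key
  · intro β _
    funext i
    dsimp only
    omega
  · intro c hc
    rw [Finset.mem_filter] at hc
    have hcond := hc.2
    funext i
    have := hcond i
    dsimp only
    omega
  · intro β _
    simp only [Q]
    congr 1
    congr 1
    funext i
    congr 1
    ring

lemma lhs_eq :
    ∑ β ∈ Finset.Nat.antidiagonalTuple n p,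
        rowdet (Matrix.of fun i j : Fin n => h (α i + (β i : ℤ) + (((j : ℕ) : ℤ) + 1)) i)
      = ∑ c ∈ S n p, (Mat n c).det • Q n h α c := by
  classical
  unfold rowdet
  simp only [Matrix.of_apply]
  rw [Finset.sum_comm]
  have e1 : ∀ σ : Equiv.Perm (Fin n),
      ∑ β ∈ Finset.Nat.antidiagonalTuple n p,
        (Equiv.Perm.sign σ : ℤ) • (List.ofFn fun i => h (α i + (β i : ℤ) + (((σ i : ℕ) : ℤ) + 1)) i).prod
      = ∑ c ∈ S n p, ((Equiv.Perm.sign σ : ℤ) *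
          (if ∀ i, ((σ i : ℕ) : ℤ) + 1 ≤ c i then 1 else 0)) • Q n h α c := by
    intro σ
    rw [← Finset.smul_sum, step1 n p h α σ, Finset.smul_sum]
    refine Finset.sum_congr rfl fun c _ => ?_
    split_ifs with hcond
    · rw [mul_one]
    · rw [mul_zero, zero_smul, smul_zero]
  rw [Finset.sum_congr rfl fun σ _ => e1 σ, Finset.sum_comm]
  refine Finset.sum_congr rfl fun c _ => ?_
  rw [det_Mat, Finset.sum_smul]

/-- Image of permutations under η-composition. -/
def im : Finset (Fin n → ℤ) :=
  Finset.univ.image fun σ : Equiv.Perm (Fin n) => fun i => eta n p (σ i)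

lemma im_subset_S (hn : 0 < n) : im n p ⊆ S n p := by
  intro c hc
  rw [im, Finset.mem_image] at hc
  obtain ⟨σ, -, rfl⟩ := hc
  rw [S, Finset.mem_filter]
  constructor
  · rw [Fintype.mem_piFinset]
    intro i
    rw [Finset.mem_Icc]
    exact eta_mem n p (σ i)
  · rw [Equiv.sum_comp σ (eta n p)]
    exact sum_eta n p hn

lemma det_Mat_eta (σ : Equiv.Perm (Fin n)) :
    (Mat n (fun i => eta n p (σ i))).det = (Equiv.Perm.sign σ : ℤ) := by
  classical
  have hN : Mat n (fun i => eta n p (σ i))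
      = (Matrix.of fun j k : Fin n => if (j : ℕ) ≤ (k : ℕ) then (1 : ℤ) else 0).submatrix id σ := by
    ext j i
    have hj := j.isLt
    have hi := (σ i).isLt
    have hiff : (((j : ℕ) : ℤ) + 1 ≤ eta n p (σ i)) ↔ ((j : ℕ) ≤ ((σ i) : ℕ)) := by
      unfold eta
      split_ifs <;> omega
    simp [Mat, Matrix.submatrix, hiff]
    simp only [Int.lt_iff_add_one_le, hiff, Fin.le_def]
  rw [hN, Matrix.det_permute']
  have hdet : (Matrix.of fun j k : Fin n => if (j : ℕ) ≤ (k : ℕ) then (1 : ℤ) else 0).det = 1 := by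
    rw [Matrix.det_of_upperTriangular]
    · simp
    · intro i j hij
      have hij' : (j : ℕ) < (i : ℕ) := hij
      simp only [Matrix.of_apply]
      rw [if_neg]
      omega
  rw [hdet, mul_one]
  norm_cast

lemma det_Mat_eq_zero (hn : 0 < n) {c : Fin n → ℤ} (hc : c ∈ S n p) (hnot : c ∉ im n p) :
    (Mat n c).det = 0 := by
  classical
  rw [S, Finset.mem_filter] at hc
  obtain ⟨hpi, hsum⟩ := hc
  have hbd : ∀ i, 1 ≤ c i ∧ c i ≤ (n : ℤ) + p := fun i =>
    Finset.mem_Icc.mp (Fintype.mem_piFinset.mp hpi i)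
  by_cases hrep : ∃ i i', i ≠ i' ∧ min (c i) (n : ℤ) = min (c i') (n : ℤ)
  · obtain ⟨i, i', hne, hmin⟩ := hrep
    apply Matrix.det_zero_of_column_eq hne
    intro j
    have hj := j.isLt
    have hiff : (((j : ℕ) : ℤ) + 1 ≤ c i) ↔ (((j : ℕ) : ℤ) + 1 ≤ c i') := by
      rw [min_def, min_def] at hmin
      split_ifs at hmin <;> omega
    simp [Mat, hiff]
    simp only [Int.lt_iff_add_one_le, hiff]
  · exfalso
    apply hnot
    push_neg at hrep
    set m : Fin n → ℤ := fun i => min (c i) (n : ℤ) with hm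
    have hm1 : ∀ i, 1 ≤ m i ∧ m i ≤ (n : ℤ) := by
      intro i
      simp only [hm]
      have := (hbd i).1
      omega
    have hτlt : ∀ i, (m i).toNat - 1 < n := by
      intro i
      have := hm1 i
      omega
    set τ : Fin n → Fin n := fun i => ⟨(m i).toNat - 1, hτlt i⟩ with hτ
    have hτval : ∀ i, ((τ i : ℕ) : ℤ) = m i - 1 := by
      intro i
      have := hm1 i
      simp only [hτ]
      omega
    have hτinj : Function.Injective τ := by
      intro a b hab
      by_contra hne
      apply hrep a b hne
      have h1 : ((τ a : ℕ) : ℤ) = ((τ b : ℕ) : ℤ) := by exact_mod_cast congrArg Fin.val hab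
      rw [hτval a, hτval b] at h1
      show m a = m b
      omega
    have hbij := Finite.injective_iff_bijective.mp hτinj
    let τe : Equiv.Perm (Fin n) := Equiv.ofBijective τ hbij
    have hτe : ∀ i, τe i = τ i := fun i => rfl
    set klast : Fin n := ⟨n - 1, by omega⟩ with hklast
    have hklastval : (klast : ℕ) = n - 1 := rfl
    set i0 : Fin n := τe.symm klast with hi0
    have hτi0 : τ i0 = klast := τe.apply_symm_apply klast
    have hτi0val : (τ i0 : ℕ) = n - 1 := by rw [hτi0]
    have hmi0 : m i0 = (n : ℤ) := by
      have h1 := hτval i0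
      have h2 := hm1 i0
      omega
    have hci0n : (n : ℤ) ≤ c i0 := by
      have := hmi0
      simp only [hm] at this
      omega
    have hτvalne : ∀ i, i ≠ i0 → (τ i : ℕ) ≠ n - 1 := by
      intro i hne hcon
      have hτne : τ i ≠ klast := by
        rw [← hτi0]
        exact fun hcon2 => hne (hτinj hcon2)
      exact hτne (Fin.ext (by rw [hklastval, hcon]))
    have hcother : ∀ i, i ≠ i0 → c i = ((τ i : ℕ) : ℤ) + 1 := by
      intro i hne
      have h1 := hτval i
      have h2 := hm1 i
      have h3 := hτvalne i hne
      have h4 : m i < (n : ℤ) := by omega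
      have h5 : c i = m i := by
        simp only [hm] at h4 ⊢
        omega
      omega
    have hTn : ∑ i : Fin n, (((τ i : ℕ) : ℤ) + 1) = Tn n :=
      Equiv.sum_comp τe (fun k : Fin n => ((k : ℕ) : ℤ) + 1)
    have hsum1 : c i0 + ∑ i ∈ Finset.univ.erase i0, c i = (p : ℤ) + Tn n := by
      rw [Finset.add_sum_erase Finset.univ c (Finset.mem_univ i0)]
      exact hsum
    have hsum2 : (n : ℤ) + ∑ i ∈ Finset.univ.erase i0, (((τ i : ℕ) : ℤ) + 1) = Tn n := by
      rw [← hTn, ← Finset.add_sum_erase Finset.univ _ (Finset.mem_univ i0)]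
      congr 1
      rw [hτi0val]
      omega
    have hsum3 : ∑ i ∈ Finset.univ.erase i0, c i
        = ∑ i ∈ Finset.univ.erase i0, (((τ i : ℕ) : ℤ) + 1) :=
      Finset.sum_congr rfl fun i hi => hcother i (Finset.ne_of_mem_erase hi)
    have hci0 : c i0 = (n : ℤ) + p := by
      rw [hsum3] at hsum1
      linarith
    rw [im, Finset.mem_image]
    refine ⟨τe, Finset.mem_univ _, funext fun i => ?_⟩
    rw [hτe]
    rcases eq_or_ne i i0 with rfl | hne
    · unfold eta
      rw [if_pos (by rw [hτi0val]; omega)]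
      exact hci0.symm
    · unfold eta
      rw [if_neg (by have := hτvalne i hne; have := (τ i).isLt; omega)]
      exact (hcother i hne).symm

lemma rhs_eq (hn : 0 < n) :
    rowdet (Matrix.of fun i j : Fin n => h (α i + eta n p j) i)
      = ∑ c ∈ S n p, (Mat n c).det • Q n h α c := by
  classical
  rw [← Finset.sum_subset (im_subset_S n p hn)
    (fun c hc hnot => by rw [det_Mat_eq_zero n p hn hc hnot, zero_smul])]
  rw [im, Finset.sum_image (fun σ _ σ' _ hσ => ?inj)]
  case inj =>
    ext i
    exact congrArg Fin.val (eta_inj n p (congrFun hσ i))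
  unfold rowdet
  refine Finset.sum_congr rfl fun σ _ => ?_
  rw [det_Mat_eta]
  rfl

end FirstPieriAux

/-- The first pre-Pieri rule. -/
theorem first_pre_pieri {R : Type*} [Ring R] (n : ℕ) (hn : 0 < n) (p : ℕ)
    (h : ℤ → Fin n → R) (α : Fin n → ℤ) :
    ∑ β ∈ Finset.Nat.antidiagonalTuple n p,
        rowdet (Matrix.of fun i j : Fin n => h (α i + (β i : ℤ) + (((j : ℕ) : ℤ) + 1)) i)
      = rowdet (Matrix.of fun i j : Fin n =>
          h (α i + (if (j : ℕ) + 1 = n then (n : ℤ) + (p : ℤ) else ((j : ℕ) : ℤ) + 1)) i) := by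
  rw [FirstPieriAux.lhs_eq n p h α]
  exact (FirstPieriAux.rhs_eq n p h α hn).symm
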